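/- Let 1 < p < s̄ and set τ := s̄(p−1)/(s̄−p); assume τ > 1. Let q > 0 and C_q ≥ 1, and let (b_k)_{k≥1} be a sequence of positive real numbers satisfying b_k ≤ C_q·2^{(j−k)q}·b_j for all integers 1 ≤ j ≤ k. Then there exists a constant C > 0, depending only on p, s̄, q and C_q, such that Σ_{k=1}^{∞} ( Σ_{j=1}^{k} ( 2^{−jp} / b_j )^{1/(p−1)} )^{τ} · b_k ≤ C · Σ_{j=1}^{∞} ( 2^{−j s̄} / b_j )^{p/(s̄−p)}, as an inequality in [0,∞]. -/

import Mathlib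

open scoped ENNReal

open Finset

section helpers

private lemma tail_geom (r c : ℝ≥0∞) {j : ℕ} (hj : 1 ≤ j) :
    (∑' k : ℕ, if 1 ≤ j ∧ j ≤ k + 1 then c * r ^ (k + 1 - j) else 0)
      = c * ∑' m : ℕ, r ^ m := by
  have hinj : Function.Injective (fun m : ℕ => j - 1 + m) := fun a b h => by simpa using h
  rw [← Function.Injective.tsum_eq hinj (f := fun k : ℕ =>
      if 1 ≤ j ∧ j ≤ k + 1 then c * r ^ (k + 1 - j) else 0) ?_]
  · calc ∑' m : ℕ, (if 1 ≤ j ∧ j ≤ (j - 1 + m) + 1 then c * r ^ ((j - 1 + m) + 1 - j) else 0)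
        = ∑' m : ℕ, c * r ^ m := by
          refine tsum_congr fun m => ?_
          rw [if_pos ⟨hj, by omega⟩]
          have h : (j - 1 + m) + 1 - j = m := by omega
          rw [h]
      _ = c * ∑' m : ℕ, r ^ m := ENNReal.tsum_mul_left
  · intro k hk
    by_cases h : 1 ≤ j ∧ j ≤ k + 1
    · refine ⟨k + 1 - j, ?_⟩
      show j - 1 + (k + 1 - j) = k
      omega
    · simp [h] at hk

private lemma sum_Icc_pow_le (r : ℝ≥0∞) (k : ℕ) :
    ∑ j ∈ Icc 1 (k + 1), r ^ (k + 1 - j) ≤ ∑' m : ℕ, r ^ m := by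
  calc ∑ j ∈ Icc 1 (k + 1), r ^ (k + 1 - j)
      ≤ ∑ j ∈ range (k + 2), r ^ (k + 1 - j) :=
        Finset.sum_le_sum_of_subset (fun j hj => by simp at hj ⊢; omega)
    _ = ∑ j ∈ range (k + 2), r ^ j := by
        exact Finset.sum_range_reflect (fun j => r ^ j) (k + 2)
    _ ≤ ∑' m : ℕ, r ^ m := ENNReal.sum_le_tsum _

private lemma sum_ite_tsum {s : Finset ℕ} (g : ℕ → ℝ≥0∞) :
    ∑ j ∈ s, g j = ∑' j : ℕ, (if j ∈ s then g j else 0) := by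
  rw [tsum_eq_sum (s := s) (fun b hb => if_neg hb)]
  exact Finset.sum_congr rfl fun j hj => (if_pos hj).symm

private lemma key_identity {p s : ℝ} (hp : 1 < p) (hps : p < s) {bj : ℝ} (hb : 0 < bj) (j : ℕ) :
    (ENNReal.ofReal ((2:ℝ) ^ (-(j:ℝ) * p) / bj) ^ (1 / (p - 1))) ^ (s * (p - 1) / (s - p))
        * ENNReal.ofReal bj
      = ENNReal.ofReal ((2:ℝ) ^ (-(j:ℝ) * s) / bj) ^ (p / (s - p)) := by
  have hp1 : (0:ℝ) < p - 1 := by linarith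
  have hsp : (0:ℝ) < s - p := by linarith
  have hu : (0:ℝ) < (2:ℝ) ^ (-(j:ℝ) * p) / bj := by positivity
  have hv : (0:ℝ) < (2:ℝ) ^ (-(j:ℝ) * s) / bj := by positivity
  rw [← ENNReal.rpow_mul]
  have hexp : 1 / (p - 1) * (s * (p - 1) / (s - p)) = s / (s - p) := by
    field_simp
  rw [hexp, ENNReal.ofReal_rpow_of_pos hu, ENNReal.ofReal_rpow_of_pos hv,
    ← ENNReal.ofReal_mul (by positivity)]
  congr 1
  have h2 : ((2:ℝ) ^ (-(j:ℝ) * p)) ^ (s / (s - p)) = ((2:ℝ) ^ (-(j:ℝ) * s)) ^ (p / (s - p)) := by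
    rw [← Real.rpow_mul (by norm_num), ← Real.rpow_mul (by norm_num)]
    have hee : -(j:ℝ) * p * (s / (s - p)) = -(j:ℝ) * s * (p / (s - p)) := by
      field_simp
    rw [hee]
  have h3 : bj ^ (s / (s - p)) = bj ^ (p / (s - p)) * bj := by
    have h : s / (s - p) = p / (s - p) + 1 := by field_simp; ring
    rw [h, Real.rpow_add hb, Real.rpow_one]
  have hbB : bj ^ (p / (s - p)) ≠ 0 := (Real.rpow_pos_of_pos hb _).ne'
  rw [Real.div_rpow (by positivity) hb.le, Real.div_rpow (by positivity) hb.le, h2, h3]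
  field_simp
end helpers

/-- **Discrete Hölder-type inequality from the proof of Theorem 6.4(a)
(case `τ_p > 1`).** Let `1 < p < s̄`, `τ = s̄(p−1)/(s̄−p) > 1`, `q > 0` and
`C_q ≥ 1`. Then there is `C > 0`, depending only on `p, s̄, q, C_q`, such that
for every positive sequence `(b_k)_{k ≥ 1}` with
`b_k ≤ C_q 2^{(j−k)q} b_j` for `1 ≤ j ≤ k`,
`Σ_{k=1}^∞ (Σ_{j=1}^k (2^{−jp}/b_j)^{1/(p−1)})^τ b_k
   ≤ C Σ_{j=1}^∞ (2^{−j s̄}/b_j)^{p/(s̄−p)}`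
as an inequality in `[0,∞]`. -/
theorem discrete_holder_sum_estimate
    (p s q Cq : ℝ) (hp : 1 < p) (hps : p < s)
    (hτ : 1 < s * (p - 1) / (s - p)) (hq : 0 < q) (hCq : 1 ≤ Cq) :
    ∃ C : ℝ, 0 < C ∧
      ∀ b : ℕ → ℝ, (∀ k, 0 < b k) →
        (∀ j k : ℕ, 1 ≤ j → j ≤ k → b k ≤ Cq * 2 ^ (((j : ℝ) - (k : ℝ)) * q) * b j) →
        (∑' k : ℕ,
            (∑ j ∈ Finset.Icc 1 (k + 1),
                ENNReal.ofReal ((2 : ℝ) ^ (-(j : ℝ) * p) / b j) ^ (1 / (p - 1)))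
              ^ (s * (p - 1) / (s - p)) * ENNReal.ofReal (b (k + 1)))
          ≤ ENNReal.ofReal C *
              ∑' j : ℕ,
                ENNReal.ofReal ((2 : ℝ) ^ (-((j + 1 : ℕ) : ℝ) * s) / b (j + 1))
                  ^ (p / (s - p)) := by
  have hp1 : (0:ℝ) < p - 1 := by linarith
  have hsp : (0:ℝ) < s - p := by linarith
  set τ : ℝ := s * (p - 1) / (s - p) with hτdef
  have hτ0 : (0:ℝ) < τ := lt_trans one_pos hτ
  have hτ1 : (0:ℝ) < τ - 1 := by linarith
  set ε : ℝ := q / (2 * (τ - 1)) with hεdef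
  have hε : 0 < ε := by positivity
  have hεδ : ε * (τ - 1) = q / 2 := by
    rw [hεdef]; field_simp
  have h2top : (2:ℝ≥0∞) ≠ ⊤ := by norm_num
  have h20 : (2:ℝ≥0∞) ≠ 0 := by norm_num
  set r1 : ℝ≥0∞ := (2:ℝ≥0∞) ^ (-ε) with hr1
  set r2 : ℝ≥0∞ := (2:ℝ≥0∞) ^ (-(q/2)) with hr2
  set W1 : ℝ≥0∞ := ∑' m : ℕ, r1 ^ m with hW1
  set W2 : ℝ≥0∞ := ∑' m : ℕ, r2 ^ m with hW2
  have hr1lt : r1 < 1 := ENNReal.rpow_lt_one_of_one_lt_of_neg (by norm_num : (1:ℝ≥0∞) < 2) (by linarith)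
  have hr2lt : r2 < 1 := ENNReal.rpow_lt_one_of_one_lt_of_neg (by norm_num : (1:ℝ≥0∞) < 2) (by linarith)
  have hW1top : W1 ≠ ⊤ := by
    rw [hW1, ENNReal.tsum_geometric]
    simp [tsub_eq_zero_iff_le, hr1lt.not_ge]
  have hW2top : W2 ≠ ⊤ := by
    rw [hW2, ENNReal.tsum_geometric]
    simp [tsub_eq_zero_iff_le, hr2lt.not_ge]
  have hW1pos : 0 < W1 := by
    have h := ENNReal.le_tsum (f := fun m : ℕ => r1 ^ m) 0
    rw [pow_zero] at h
    exact lt_of_lt_of_le zero_lt_one h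
  have hW2pos : 0 < W2 := by
    have h := ENNReal.le_tsum (f := fun m : ℕ => r2 ^ m) 0
    rw [pow_zero] at h
    exact lt_of_lt_of_le zero_lt_one h
  set K : ℝ≥0∞ := W1 ^ (τ - 1) * (ENNReal.ofReal Cq * W2) with hK
  have hKtop : K ≠ ⊤ := by
    rw [hK]
    exact ENNReal.mul_ne_top (ENNReal.rpow_ne_top_of_nonneg hτ1.le hW1top)
      (ENNReal.mul_ne_top ENNReal.ofReal_ne_top hW2top)
  have hKpos : 0 < K := by
    rw [hK]
    exact ENNReal.mul_pos (ENNReal.rpow_pos hW1pos hW1top).ne'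
      (ENNReal.mul_pos (ENNReal.ofReal_pos.2 (by linarith)).ne' hW2pos.ne').ne'
  refine ⟨K.toReal, ENNReal.toReal_pos hKpos.ne' hKtop, ?_⟩
  intro b hb hbb
  rw [ENNReal.ofReal_toReal hKtop]
  set x : ℕ → ℝ≥0∞ :=
    fun j => ENNReal.ofReal ((2 : ℝ) ^ (-(j : ℝ) * p) / b j) ^ (1 / (p - 1)) with hx
  -- Step 1 : pointwise Hölder
  have claim1 : ∀ k : ℕ, (∑ j ∈ Icc 1 (k+1), x j) ^ τ ≤
      W1 ^ (τ-1) * ∑ j ∈ Icc 1 (k+1), (2:ℝ≥0∞) ^ ((q/2) * (((k:ℝ)+1) - j)) * x j ^ τ := by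
    intro k
    set w : ℕ → ℝ≥0∞ := fun j => (2:ℝ≥0∞) ^ (ε * ((j:ℝ) - ((k:ℝ)+1))) with hw
    have hwne : ∀ j, w j ≠ 0 ∧ w j ≠ ⊤ := fun j =>
      ⟨by simp [hw, ENNReal.rpow_eq_zero_iff], by simp [hw, ENNReal.rpow_eq_top_iff]⟩
    have hsum_w : ∑ j ∈ Icc 1 (k+1), w j ≤ W1 := by
      have heq : ∀ j ∈ Icc 1 (k+1), w j = r1 ^ (k + 1 - j) := by
        intro j hj
        simp only [Finset.mem_Icc] at hj
        rw [hw, hr1, ← ENNReal.rpow_natCast ((2:ℝ≥0∞) ^ (-ε)) (k+1-j), ← ENNReal.rpow_mul]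
        have hcast : ((k + 1 - j : ℕ) : ℝ) = ((k:ℝ) + 1) - (j:ℝ) := by
          push_cast [Nat.cast_sub hj.2]
          ring
        rw [hcast]
        ring_nf
      calc ∑ j ∈ Icc 1 (k+1), w j = ∑ j ∈ Icc 1 (k+1), r1 ^ (k+1-j) :=
            Finset.sum_congr rfl heq
        _ ≤ W1 := sum_Icc_pow_le r1 k
    have hx_eq : ∀ j, x j = w j * (x j * (w j)⁻¹) := by
      intro j
      rw [mul_left_comm, ENNReal.mul_inv_cancel (hwne j).1 (hwne j).2, mul_one]
    have holder := ENNReal.inner_le_weight_mul_Lp_of_nonneg (Icc 1 (k+1)) (le_of_lt hτ) w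
      (fun j => x j * (w j)⁻¹)
    have hterm : ∀ j ∈ Icc 1 (k+1), w j * (x j * (w j)⁻¹) ^ τ
        = (2:ℝ≥0∞) ^ ((q/2) * (((k:ℝ)+1) - j)) * x j ^ τ := by
      intro j hj
      have hwj : w j = (2:ℝ≥0∞) ^ (ε * ((j:ℝ) - ((k:ℝ)+1))) := rfl
      have e1 : (w j)⁻¹ ^ τ = (2:ℝ≥0∞) ^ (-(ε * ((j:ℝ) - ((k:ℝ)+1))) * τ) := by
        rw [hwj, ← ENNReal.rpow_neg, ← ENNReal.rpow_mul]
      have e2 : w j * (2:ℝ≥0∞) ^ (-(ε * ((j:ℝ) - ((k:ℝ)+1))) * τ)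
          = (2:ℝ≥0∞) ^ ((q/2) * (((k:ℝ)+1) - j)) := by
        rw [hwj, ← ENNReal.rpow_add _ _ h20 h2top]
        congr 1
        linear_combination (((k:ℝ)+1) - (j:ℝ)) * hεδ
      rw [ENNReal.mul_rpow_of_nonneg _ _ hτ0.le, e1, mul_left_comm, e2, mul_comm]
    calc (∑ j ∈ Icc 1 (k+1), x j) ^ τ
        = (∑ j ∈ Icc 1 (k+1), w j * (x j * (w j)⁻¹)) ^ τ := by
          congr 1
          exact Finset.sum_congr rfl fun j _ => hx_eq j
      _ ≤ ((∑ j ∈ Icc 1 (k+1), w j) ^ (1 - τ⁻¹) *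
            (∑ j ∈ Icc 1 (k+1), w j * (x j * (w j)⁻¹) ^ τ) ^ τ⁻¹) ^ τ :=
          ENNReal.rpow_le_rpow holder hτ0.le
      _ = (∑ j ∈ Icc 1 (k+1), w j) ^ (τ - 1) *
            (∑ j ∈ Icc 1 (k+1), w j * (x j * (w j)⁻¹) ^ τ) := by
          rw [ENNReal.mul_rpow_of_nonneg _ _ hτ0.le, ← ENNReal.rpow_mul, ← ENNReal.rpow_mul,
            show (1 - τ⁻¹) * τ = τ - 1 by field_simp,
            inv_mul_cancel₀ hτ0.ne', ENNReal.rpow_one]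
      _ ≤ W1 ^ (τ - 1) * ∑ j ∈ Icc 1 (k+1), (2:ℝ≥0∞) ^ ((q/2) * (((k:ℝ)+1) - j)) * x j ^ τ := by
          refine mul_le_mul' (ENNReal.rpow_le_rpow hsum_w hτ1.le) ?_
          exact le_of_eq (Finset.sum_congr rfl hterm)
  set c : ℕ → ℝ≥0∞ := fun j => ENNReal.ofReal Cq * (x j ^ τ * ENNReal.ofReal (b j)) with hc
  -- Step 2 : termwise comparison for the swapped double sum
  have claim2 : ∀ j k : ℕ,
      (if j ∈ Icc 1 (k+1)
        then (2:ℝ≥0∞) ^ ((q/2) * (((k:ℝ)+1) - j)) * x j ^ τ * ENNReal.ofReal (b (k+1)) else 0)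
      ≤ (if 1 ≤ j ∧ j ≤ k+1 then c j * r2 ^ (k + 1 - j) else 0) := by
    intro j k
    by_cases hjk : 1 ≤ j ∧ j ≤ k + 1
    · rw [if_pos (Finset.mem_Icc.2 hjk), if_pos hjk]
      have hB : ENNReal.ofReal (b (k+1)) ≤
          ENNReal.ofReal Cq * (2:ℝ≥0∞) ^ (((j:ℝ) - ((k:ℝ)+1)) * q) * ENNReal.ofReal (b j) := by
        have h1 := hbb j (k+1) hjk.1 hjk.2
        calc ENNReal.ofReal (b (k+1))
            ≤ ENNReal.ofReal (Cq * 2 ^ (((j:ℝ) - ((k:ℝ)+1)) * q) * b j) := by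
              apply ENNReal.ofReal_le_ofReal
              convert h1 using 4
              push_cast
              ring
          _ = ENNReal.ofReal Cq * (2:ℝ≥0∞) ^ (((j:ℝ) - ((k:ℝ)+1)) * q) * ENNReal.ofReal (b j) := by
              rw [ENNReal.ofReal_mul (by positivity), ENNReal.ofReal_mul (by linarith)]
              congr 1
              rw [← ENNReal.ofReal_rpow_of_pos two_pos, ENNReal.ofReal_ofNat]
      have hpow : (2:ℝ≥0∞) ^ ((q/2) * (((k:ℝ)+1) - j)) *
          (2:ℝ≥0∞) ^ (((j:ℝ) - ((k:ℝ)+1)) * q) = r2 ^ (k+1-j) := by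
        rw [← ENNReal.rpow_add _ _ h20 h2top, hr2,
          ← ENNReal.rpow_natCast ((2:ℝ≥0∞) ^ (-(q/2))) (k+1-j), ← ENNReal.rpow_mul]
        congr 1
        have hcast : ((k + 1 - j : ℕ) : ℝ) = ((k:ℝ) + 1) - (j:ℝ) := by
          push_cast [Nat.cast_sub hjk.2]
          ring
        rw [hcast]; ring
      calc (2:ℝ≥0∞) ^ ((q/2) * (((k:ℝ)+1) - j)) * x j ^ τ * ENNReal.ofReal (b (k+1))
          ≤ (2:ℝ≥0∞) ^ ((q/2) * (((k:ℝ)+1) - j)) * x j ^ τ *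
              (ENNReal.ofReal Cq * (2:ℝ≥0∞) ^ (((j:ℝ) - ((k:ℝ)+1)) * q) * ENNReal.ofReal (b j)) :=
            mul_le_mul_right hB _
        _ = (ENNReal.ofReal Cq * (x j ^ τ * ENNReal.ofReal (b j))) *
              ((2:ℝ≥0∞) ^ ((q/2) * (((k:ℝ)+1) - j)) * (2:ℝ≥0∞) ^ (((j:ℝ) - ((k:ℝ)+1)) * q)) := by
            ring
        _ = c j * r2 ^ (k+1-j) := by rw [hpow, hc]
    · rw [if_neg (fun hmem => hjk (Finset.mem_Icc.1 hmem)), if_neg hjk]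
  -- Step 3 : sum the geometric tails
  have claim3 : ∀ j : ℕ,
      (∑' k : ℕ, if 1 ≤ j ∧ j ≤ k+1 then c j * r2 ^ (k + 1 - j) else 0)
        ≤ (if 1 ≤ j then c j * W2 else 0) := by
    intro j
    rcases Nat.eq_zero_or_pos j with hj | hj
    · subst hj; simp
    · have hj' : 1 ≤ j := hj
      rw [if_pos hj', hW2]
      exact le_of_eq (tail_geom r2 (c j) hj')
  -- reindexing
  have hreindex : ∑' j : ℕ, (if 1 ≤ j then c j * W2 else 0) = ∑' i : ℕ, c (i+1) * W2 := by
    rw [← Function.Injective.tsum_eq (g := fun i : ℕ => i + 1)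
      (fun a b h => by simpa using h)
      (f := fun j => if 1 ≤ j then c j * W2 else 0) ?_]
    · exact tsum_congr fun i => if_pos (by omega)
    · intro j hj
      rcases Nat.eq_zero_or_pos j with h0 | h0
      · subst h0; simp at hj
      · refine ⟨j - 1, ?_⟩
        show j - 1 + 1 = j
        omega
  -- the identity x j ^ τ * b j = RHS term
  have hident : ∀ i : ℕ, x (i+1) ^ τ * ENNReal.ofReal (b (i+1))
      = ENNReal.ofReal ((2 : ℝ) ^ (-((i + 1 : ℕ) : ℝ) * s) / b (i + 1)) ^ (p / (s - p)) := by
    intro i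
    rw [hx]
    exact key_identity hp hps (hb (i+1)) (i+1)
  -- assemble
  calc (∑' k : ℕ, (∑ j ∈ Icc 1 (k+1), x j) ^ τ * ENNReal.ofReal (b (k+1)))
      ≤ ∑' k : ℕ, (W1 ^ (τ-1) *
          ∑ j ∈ Icc 1 (k+1), (2:ℝ≥0∞) ^ ((q/2) * (((k:ℝ)+1) - j)) * x j ^ τ) *
            ENNReal.ofReal (b (k+1)) :=
        ENNReal.tsum_le_tsum fun k => mul_le_mul_left (claim1 k) _
    _ = W1 ^ (τ-1) * ∑' k : ℕ, ∑ j ∈ Icc 1 (k+1),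
          (2:ℝ≥0∞) ^ ((q/2) * (((k:ℝ)+1) - j)) * x j ^ τ * ENNReal.ofReal (b (k+1)) := by
        rw [← ENNReal.tsum_mul_left]
        refine tsum_congr fun k => ?_
        rw [mul_assoc, Finset.sum_mul]
    _ = W1 ^ (τ-1) * ∑' k : ℕ, ∑' j : ℕ, (if j ∈ Icc 1 (k+1)
          then (2:ℝ≥0∞) ^ ((q/2) * (((k:ℝ)+1) - j)) * x j ^ τ * ENNReal.ofReal (b (k+1))
          else 0) := by
        congr 1
        exact tsum_congr fun k => sum_ite_tsum _
    _ = W1 ^ (τ-1) * ∑' j : ℕ, ∑' k : ℕ, (if j ∈ Icc 1 (k+1)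
          then (2:ℝ≥0∞) ^ ((q/2) * (((k:ℝ)+1) - j)) * x j ^ τ * ENNReal.ofReal (b (k+1))
          else 0) := by
        rw [ENNReal.tsum_comm]
    _ ≤ W1 ^ (τ-1) * ∑' j : ℕ, ∑' k : ℕ,
          (if 1 ≤ j ∧ j ≤ k+1 then c j * r2 ^ (k + 1 - j) else 0) :=
        mul_le_mul_right (ENNReal.tsum_le_tsum fun j => ENNReal.tsum_le_tsum fun k =>
          claim2 j k) _
    _ ≤ W1 ^ (τ-1) * ∑' j : ℕ, (if 1 ≤ j then c j * W2 else 0) :=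
        mul_le_mul_right (ENNReal.tsum_le_tsum claim3) _
    _ = W1 ^ (τ-1) * ∑' i : ℕ, c (i+1) * W2 := by rw [hreindex]
    _ = K * ∑' i : ℕ,
          ENNReal.ofReal ((2 : ℝ) ^ (-((i + 1 : ℕ) : ℝ) * s) / b (i + 1)) ^ (p / (s - p)) := by
        rw [hK, mul_assoc]
        congr 1
        calc ∑' i : ℕ, c (i+1) * W2
            = ∑' i : ℕ, (ENNReal.ofReal Cq * W2) *
                (x (i+1) ^ τ * ENNReal.ofReal (b (i+1))) := by
              refine tsum_congr fun i => ?_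
              rw [hc]; ring
          _ = (ENNReal.ofReal Cq * W2) * ∑' i : ℕ,
                (x (i+1) ^ τ * ENNReal.ofReal (b (i+1))) := ENNReal.tsum_mul_left
          _ = (ENNReal.ofReal Cq * W2) * ∑' i : ℕ,
                ENNReal.ofReal ((2 : ℝ) ^ (-((i + 1 : ℕ) : ℝ) * s) / b (i + 1)) ^ (p / (s - p)) := by
              rw [tsum_congr hident]
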